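/- Let n ≥ 2, h = ⌊log₂ n⌋, and κ = n − (2^h − 1). Then the subtree of node 2 (the left child of the root 1) in the implicit binary tree on {1,…,n} has exactly 2^{h−1} − 1 + min(κ, 2^{h−1}) nodes. Hence the rank (from the smallest) of the element that must be placed at the root so that its left subtree receives exactly the correct number of elements — the block-median rank used by the in-place k-d tree construction — equals 2^{h−1} + min(κ, 2^{h−1}). -/

import Mathlib

lemma sum_two_pow (m : ℕ) : ∑ d ∈ Finset.range m, 2 ^ d = 2 ^ m - 1 := by
  induction m with
  | zero => simp
  | succ m ih =>
    rw [Finset.sum_range_succ, ih]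
    have : 1 ≤ 2 ^ m := Nat.one_le_two_pow
    rw [pow_succ]; omega

theorem stmt5 (n : ℕ) (hn : 2 ≤ n) (h κ : ℕ)
    (hh : h = Nat.log 2 n) (hκ : κ = n - (2 ^ h - 1)) :
    ({s : ℕ | 1 ≤ s ∧ s ≤ n ∧ ∃ d : ℕ, s / 2 ^ d = 2}).ncard
      = 2 ^ (h - 1) - 1 + min κ (2 ^ (h - 1)) ∧
    ({s : ℕ | 1 ≤ s ∧ s ≤ n ∧ ∃ d : ℕ, s / 2 ^ d = 2}).ncard + 1
      = 2 ^ (h - 1) + min κ (2 ^ (h - 1)) := by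
  have h1 : 1 ≤ h := by
    rw [hh]; exact Nat.le_log_of_pow_le one_lt_two (by simpa using hn)
  have hpow : 2 ^ h ≤ n := hh ▸ Nat.pow_log_le_self 2 (by omega)
  have hlt : n < 2 ^ (h + 1) := hh ▸ Nat.lt_pow_succ_log_self one_lt_two n
  have key : ({s : ℕ | 1 ≤ s ∧ s ≤ n ∧ ∃ d : ℕ, s / 2 ^ d = 2}) =
      ↑((Finset.range h).biUnion fun d =>
        Finset.Ico (2 ^ (d + 1)) (min (3 * 2 ^ d) (n + 1))) := by
    ext s
    simp only [Set.mem_setOf_eq, Finset.coe_biUnion, Finset.mem_coe, Finset.mem_biUnion,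
      Finset.mem_range, Finset.mem_Ico, lt_min_iff, Set.mem_iUnion]
    constructor
    · rintro ⟨hs1, hsn, d, hd⟩
      have hp : 0 < 2 ^ d := Nat.pow_pos (by norm_num)
      have hle : 2 * 2 ^ d ≤ s := (Nat.le_div_iff_mul_le hp).mp (le_of_eq hd.symm)
      have hlt2 : s < 3 * 2 ^ d := (Nat.div_lt_iff_lt_mul hp).mp (by omega)
      have hdh : d < h := by
        have : 2 ^ (d + 1) < 2 ^ (h + 1) := by
          calc 2 ^ (d + 1) = 2 * 2 ^ d := by rw [pow_succ]; ring
          _ ≤ s := hle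
          _ ≤ n := hsn
          _ < 2 ^ (h + 1) := hlt
        have := (Nat.pow_lt_pow_iff_right (by norm_num : 1 < 2)).mp this
        omega
      exact ⟨d, hdh, by rw [pow_succ]; omega, by omega, by omega⟩
    · rintro ⟨d, hdh, hle, hlt2, hsn⟩
      have hp : 1 ≤ 2 ^ d := Nat.one_le_two_pow
      refine ⟨by rw [pow_succ] at hle; omega, by omega, d, ?_⟩
      exact Nat.div_eq_of_lt_le (by rw [pow_succ] at hle; omega) (by omega)
  rw [key, Set.ncard_coe_finset]
  rw [Finset.card_biUnion]
  · have hsum : ∑ d ∈ Finset.range h, (min (3 * 2 ^ d) (n + 1) - 2 ^ (d + 1))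
        = 2 ^ (h - 1) - 1 + min κ (2 ^ (h - 1)) := by
      obtain ⟨m, rfl⟩ : ∃ m, h = m + 1 := ⟨h - 1, by omega⟩
      rw [Finset.sum_range_succ]
      have hstep : ∀ d ∈ Finset.range m,
          min (3 * 2 ^ d) (n + 1) - 2 ^ (d + 1) = 2 ^ d := by
        intro d hd
        simp only [Finset.mem_range] at hd
        have h3 : 3 * 2 ^ d ≤ n + 1 := by
          have : 2 ^ (d + 2) ≤ 2 ^ (m + 1) :=
            Nat.pow_le_pow_right (by norm_num) (by omega)
          have h4 : 2 ^ (d + 2) = 4 * 2 ^ d := by rw [pow_succ, pow_succ]; ring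
          omega
        rw [min_eq_left h3, pow_succ]; omega
      rw [Finset.sum_congr rfl hstep, sum_two_pow]
      have e1 : 2 ^ (m + 1) = 2 * 2 ^ m := by rw [pow_succ]; ring
      have e2 : 2 ^ (m + 1 + 1) = 4 * 2 ^ m := by rw [pow_succ, pow_succ]; ring
      have hp : 1 ≤ 2 ^ m := Nat.one_le_two_pow
      simp only [Nat.add_sub_cancel]
      omega
    simp only [Nat.card_Ico]
    rw [hsum]
    have hp : 1 ≤ 2 ^ (h - 1) := Nat.one_le_two_pow
    omega
  · intro d1 hm1 d2 hm2 hne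
    wlog hlt12 : d1 < d2 generalizing d1 d2
    · exact (@this d2 hm2 d1 hm1 hne.symm (by omega)).symm
    simp only [Finset.disjoint_left, Finset.mem_Ico, lt_min_iff]
    rintro s ⟨_, hs1, _⟩ ⟨hs2, _, _⟩
    have : 2 ^ (d1 + 2) ≤ 2 ^ (d2 + 1) :=
      Nat.pow_le_pow_right (by norm_num) (by omega)
    have h4 : 2 ^ (d1 + 2) = 4 * 2 ^ d1 := by rw [pow_succ, pow_succ]; ring
    have h2 : 2 ^ (d2 + 1) ≤ s := hs2
    omega
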